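/- Define A_p(λ) := 2 sinc(1−λ) [1 + (1−λ)(ψ⁰(p−λ+1) − ψ⁰(2−λ))] for λ ∈ (0,1) and p ∈ ℕ, where sinc z = sin(πz)/(πz) and ψ⁰ is the digamma function. Then for all p ≥ 3 and all λ ∈ (0,1), (p+1) − A_{p+1}(λ) > p − A_p(λ). -/

import Mathlib

/-- Normalized sinc: sinc z = sin(πz)/(πz), sinc 0 = 1. -/
noncomputable def sinc (z : ℝ) : ℝ :=
  if z = 0 then 1 else Real.sin (Real.pi * z) / (Real.pi * z)

/-- The digamma function ψ⁰ = (log Γ)'. -/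
noncomputable def digamma (x : ℝ) : ℝ :=
  deriv (fun y : ℝ => Real.log (Real.Gamma y)) x

/-- A_p(λ) = 2 sinc(1−λ) [1 + (1−λ)(ψ⁰(p−λ+1) − ψ⁰(2−λ))]. -/
noncomputable def A (p : ℕ) (lam : ℝ) : ℝ :=
  2 * sinc (1 - lam) * (1 + (1 - lam) * (digamma (p - lam + 1) - digamma (2 - lam)))

lemma digamma_add_one {x : ℝ} (hx : 0 < x) : digamma (x + 1) = digamma x + 1 / x := by
  have hΓ : DifferentiableAt ℝ Real.Gamma x :=
    Real.differentiableAt_Gamma (fun m => ne_of_gt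
      (lt_of_le_of_lt (neg_nonpos.mpr (Nat.cast_nonneg (α := ℝ) m)) hx))
  have hΓpos : 0 < Real.Gamma x := Real.Gamma_pos_of_pos hx
  have hlogΓ : DifferentiableAt ℝ (fun y : ℝ => Real.log (Real.Gamma y)) x :=
    hΓ.log hΓpos.ne'
  have key : digamma (x + 1) = deriv (fun y : ℝ => Real.log (Real.Gamma (y + 1))) x := by
    rw [digamma]
    exact (deriv_comp_add_const (fun y : ℝ => Real.log (Real.Gamma y)) 1 x).symm
  have hev : (fun y : ℝ => Real.log (Real.Gamma (y + 1)))
      =ᶠ[nhds x] fun y : ℝ => Real.log y + Real.log (Real.Gamma y) := by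
    filter_upwards [eventually_gt_nhds hx] with y hy
    rw [Real.Gamma_add_one hy.ne', Real.log_mul hy.ne' (Real.Gamma_pos_of_pos hy).ne']
  rw [key, hev.deriv_eq, deriv_fun_add (Real.differentiableAt_log hx.ne') hlogΓ]
  rw [show deriv (fun y : ℝ => Real.log y) x = deriv Real.log x from rfl, Real.deriv_log,
    digamma]
  rw [one_div]
  ring

theorem A_monotonicity (p : ℕ) (hp : 3 ≤ p) (lam : ℝ) (hlam : lam ∈ Set.Ioo (0 : ℝ) 1) :
    (p : ℝ) - A p lam < ((p : ℝ) + 1) - A (p + 1) lam := by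
  obtain ⟨h0, h1⟩ := hlam
  have hp3 : (3 : ℝ) ≤ p := by exact_mod_cast hp
  set x : ℝ := (p : ℝ) - lam + 1 with hxdef
  have hx3 : 3 ≤ x := by simp only [hxdef]; linarith
  have hx : 0 < x := by linarith
  have hdg : digamma ((↑(p + 1) : ℝ) - lam + 1) = digamma x + 1 / x := by
    have h : ((↑(p + 1) : ℝ) - lam + 1) = x + 1 := by push_cast [hxdef]; ring
    rw [h, digamma_add_one hx]
  have htpos : 0 < 1 - lam := by linarith
  have hsinc : sinc (1 - lam) = Real.sin (Real.pi * (1 - lam)) / (Real.pi * (1 - lam)) := by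
    rw [sinc, if_neg htpos.ne']
  have hpi := Real.pi_gt_three
  have hdiff : A (p + 1) lam - A p lam = 2 * Real.sin (Real.pi * (1 - lam)) / (Real.pi * x) := by
    simp only [A, hsinc, hdg, ← hxdef]
    field_simp
    ring
  have hlt : 2 * Real.sin (Real.pi * (1 - lam)) / (Real.pi * x) < 1 := by
    rw [div_lt_one (by positivity)]
    nlinarith [Real.sin_le_one (Real.pi * (1 - lam))]
  linarith
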